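/- Let $X$ be a Banach space and $1 \le p < t < r < \infty$. Then the set $L_c^\infty(X)$ of compactly supported, bounded, $X$-valued measurable functions is dense in the Bourgain-Morrey space $M_p^{t,r}(X)$. -/

import Mathlib

open MeasureTheory Filter ENNReal

noncomputable section

/-- The dyadic cube `Q_{j,m} = ∏ᵢ [2^{-j} mᵢ, 2^{-j}(mᵢ+1))` in `ℝⁿ`. -/
def dyadicCube (n : ℕ) (j : ℤ) (m : Fin n → ℤ) : Set (Fin n → ℝ) :=
  {x | ∀ i, (2:ℝ) ^ (-(j:ℝ)) * m i ≤ x i ∧ x i < (2:ℝ) ^ (-(j:ℝ)) * (m i + 1)}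

/-- The volume `2^{-jn}` of a dyadic cube of generation `j`, as an extended nonnegative real. -/
def cubeVol (n : ℕ) (j : ℤ) : ℝ≥0∞ := (2:ℝ≥0∞) ^ (-((j:ℝ) * n))

/-- The `ℓ^r` norm of an `ℝ≥0∞`-valued family, `r ∈ (0,∞]`. -/
def lrNorm {ι : Type*} (r : ℝ≥0∞) (a : ι → ℝ≥0∞) : ℝ≥0∞ :=
  if r = ∞ then ⨆ i, a i else (∑' i, a i ^ r.toReal) ^ (1 / r.toReal)

/-- The Bourgain–Morrey norm of an `X`-valued function on `ℝⁿ`. -/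
def BMnorm (n : ℕ) (p t : ℝ) (r : ℝ≥0∞) {X : Type*} [NormedAddCommGroup X]
    (f : (Fin n → ℝ) → X) : ℝ≥0∞ :=
  lrNorm r fun jm : ℤ × (Fin n → ℤ) =>
    cubeVol n jm.1 ^ (1/t - 1/p) *
      (∫⁻ x in dyadicCube n jm.1 jm.2, (‖f x‖₊ : ℝ≥0∞) ^ p) ^ (1/p)

/-- Membership in the Bourgain–Morrey space `M_p^{t,r}(X)`. -/
def MemBM (n : ℕ) (p t : ℝ) (r : ℝ≥0∞) {X : Type*} [NormedAddCommGroup X]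
    (f : (Fin n → ℝ) → X) : Prop :=
  AEStronglyMeasurable f volume ∧ BMnorm n p t r f < ∞

/-- The conjugate exponent `a' = a/(a-1)`. -/
def conj (a : ℝ) : ℝ := a / (a - 1)

/-- The conjugate exponent of `r ∈ (1,∞]`, with `∞' = 1`. -/
def conjE (r : ℝ≥0∞) : ℝ := if r = ∞ then 1 else conj r.toReal

/-- A `(p',t',Y)`-block supported on the dyadic cube `Q_{j,k}`. -/
def IsBlock (n : ℕ) (p t : ℝ) (j : ℤ) (k : Fin n → ℤ) {Y : Type*} [NormedAddCommGroup Y]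
    (b : (Fin n → ℝ) → Y) : Prop :=
  AEStronglyMeasurable b volume ∧ (∀ x, x ∉ dyadicCube n j k → b x = 0) ∧
    (∫⁻ x, (‖b x‖₊ : ℝ≥0∞) ^ conj p) ^ (1 / conj p) ≤ cubeVol n j ^ (1/t - 1/p)

/-- A representation of `f` as an a.e. convergent sum of blocks with coefficients `lam`. -/
def IsBlockRep (n : ℕ) (p t : ℝ) {Y : Type*} [NormedAddCommGroup Y] [NormedSpace ℝ Y]
    (f : (Fin n → ℝ) → Y) (lam : ℤ × (Fin n → ℤ) → ℝ)
    (b : ℤ × (Fin n → ℤ) → (Fin n → ℝ) → Y) : Prop :=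
  (∀ jk : ℤ × (Fin n → ℤ), IsBlock n p t jk.1 jk.2 (b jk)) ∧
    ∀ᵐ x : Fin n → ℝ ∂volume, HasSum (fun jk => lam jk • b jk x) (f x)

/-- The norm of the block space `𝓗_{p'}^{t',r'}(Y)` (parametrized by `p`, `t` and `r'`). -/
def blockNorm (n : ℕ) (p t r' : ℝ) {Y : Type*} [NormedAddCommGroup Y] [NormedSpace ℝ Y]
    (f : (Fin n → ℝ) → Y) : ℝ≥0∞ :=
  ⨅ (lam : ℤ × (Fin n → ℤ) → ℝ) (b : ℤ × (Fin n → ℤ) → (Fin n → ℝ) → Y)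
    (_ : IsBlockRep n p t f lam b),
    (∑' jk : ℤ × (Fin n → ℤ), ENNReal.ofReal |lam jk| ^ r') ^ (1 / r')

/-- Membership in the block space `𝓗_{p'}^{t',r'}(Y)`. -/
def MemBlock (n : ℕ) (p t r' : ℝ) {Y : Type*} [NormedAddCommGroup Y] [NormedSpace ℝ Y]
    (f : (Fin n → ℝ) → Y) : Prop := blockNorm n p t r' f < ∞

/-- The dyadic averaging operator `E_k` at generation `k`. -/
def Ek (n : ℕ) {X : Type*} [NormedAddCommGroup X] [NormedSpace ℝ X]
    (k : ℤ) (f : (Fin n → ℝ) → X) (x : Fin n → ℝ) : X :=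
  ((2:ℝ) ^ ((k:ℝ) * n)) • ∫ y in dyadicCube n k fun i => ⌊(2:ℝ) ^ (k:ℝ) * x i⌋, f y


open Topology

section DensityAux

lemma dyadicCube_eq_pi (n : ℕ) (j : ℤ) (m : Fin n → ℤ) :
    dyadicCube n j m = Set.pi Set.univ
      (fun i => Set.Ico ((2:ℝ)^(-(j:ℝ)) * m i) ((2:ℝ)^(-(j:ℝ)) * (m i + 1))) := by
  ext x
  simp [dyadicCube, Set.mem_pi, Set.mem_Ico]

lemma measurableSet_dyadicCube (n : ℕ) (j : ℤ) (m : Fin n → ℤ) :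
    MeasurableSet (dyadicCube n j m) := by
  rw [dyadicCube_eq_pi]
  exact MeasurableSet.univ_pi fun i => measurableSet_Ico

lemma dyadicCube_subset_Icc (n : ℕ) (j : ℤ) (m : Fin n → ℤ) :
    dyadicCube n j m ⊆ Set.pi Set.univ
      (fun i => Set.Icc ((2:ℝ)^(-(j:ℝ)) * m i) ((2:ℝ)^(-(j:ℝ)) * (m i + 1))) := by
  intro x hx
  rw [Set.mem_univ_pi]
  exact fun i => ⟨(hx i).1, (hx i).2.le⟩

lemma cubeVol_ne_zero (n : ℕ) (j : ℤ) : cubeVol n j ≠ 0 := by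
  simp [cubeVol, ENNReal.rpow_eq_zero_iff]

lemma cubeVol_ne_top (n : ℕ) (j : ℤ) : cubeVol n j ≠ ∞ := by
  simp [cubeVol, ENNReal.rpow_eq_top_iff]

lemma ennreal_tsum_split {ι : Type*} (S : Finset ι) (G : ι → ℝ≥0∞) :
    ∑' i, G i = (∑ i ∈ S, G i) + ∑' i : {x : ι // x ∉ S}, G i.1 := by
  classical
  have h1 : ∑' i, G i = ∑' i, ((↑S : Set ι).indicator G i + ((↑S : Set ι)ᶜ).indicator G i) := by
    refine tsum_congr fun i => ?_
    rw [Set.indicator_self_add_compl_apply]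
  have h2 : ((↑S : Set ι)ᶜ) = {x : ι | x ∉ S} := by ext; simp
  rw [h1, ENNReal.tsum_add, ← tsum_subtype, ← tsum_subtype, Finset.tsum_subtype', h2]
  rfl

end DensityAux

set_option maxHeartbeats 2000000 in
theorem Linfty_c_dense_in_BM (n : ℕ) (p t r : ℝ)
    {X : Type*} [NormedAddCommGroup X] [NormedSpace ℝ X] [CompleteSpace X]
    (hp : 1 ≤ p) (hpt : p < t) (htr : t < r)
    (f : (Fin n → ℝ) → X) (hf : MemBM n p t (ENNReal.ofReal r) f)
    (ε : ℝ≥0∞) (hε : 0 < ε) :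
    ∃ g : (Fin n → ℝ) → X,
      AEStronglyMeasurable g volume ∧ (∃ M : ℝ, ∀ x, ‖g x‖ ≤ M) ∧
        HasCompactSupport g ∧
        BMnorm n p t (ENNReal.ofReal r) (fun x => f x - g x) < ε := by
  classical
  obtain ⟨hmeas, hnorm⟩ := hf
  have hp0 : (0:ℝ) < p := lt_of_lt_of_le one_pos hp
  have hr0 : (0:ℝ) < r := by linarith
  have hrinv : (0:ℝ) < 1 / r := by positivity
  have hpinv : (0:ℝ) < 1 / p := by positivity
  have hρ_ne_top : (ENNReal.ofReal r) ≠ ∞ := ENNReal.ofReal_ne_top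
  have hρ_toReal : (ENNReal.ofReal r).toReal = r := ENNReal.toReal_ofReal hr0.le
  set θ : ℝ := 1/t - 1/p with hθ
  have hC0 : ∀ j : ℤ, cubeVol n j ^ θ ≠ 0 := fun j => by
    simp [ENNReal.rpow_eq_zero_iff, cubeVol_ne_zero, cubeVol_ne_top]
  have hCtop : ∀ j : ℤ, cubeVol n j ^ θ ≠ ∞ := fun j => by
    simp [ENNReal.rpow_eq_top_iff, cubeVol_ne_zero, cubeVol_ne_top]
  have hBM : ∀ h : (Fin n → ℝ) → X, BMnorm n p t (ENNReal.ofReal r) h =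
      (∑' jm : ℤ × (Fin n → ℤ), (cubeVol n jm.1 ^ θ *
        (∫⁻ x in dyadicCube n jm.1 jm.2, (‖h x‖₊ : ℝ≥0∞) ^ p) ^ (1/p)) ^ r) ^ (1/r) := by
    intro h
    rw [BMnorm, lrNorm, if_neg hρ_ne_top, hρ_toReal]
  set F : ℤ × (Fin n → ℤ) → ℝ≥0∞ := fun jm => cubeVol n jm.1 ^ θ *
      (∫⁻ x in dyadicCube n jm.1 jm.2, (‖f x‖₊ : ℝ≥0∞) ^ p) ^ (1/p) with hFdef
  have hsum_ne_top : (∑' jm : ℤ × (Fin n → ℤ), F jm ^ r) ≠ ∞ := by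
    rw [hBM f] at hnorm
    exact ((ENNReal.rpow_lt_top_iff_of_pos hrinv).1 hnorm).ne
  -- the target quantity
  set ε' : ℝ≥0∞ := min ε 1 with hε'
  have hε'0 : ε' ≠ 0 := (lt_min hε one_pos).ne'
  have hε'top : ε' ≠ ∞ := ((min_le_right ε 1).trans_lt ENNReal.one_lt_top).ne
  set δ : ℝ≥0∞ := (ε' / 2) ^ r with hδ
  have hhalf0 : ε' / 2 ≠ 0 := by
    simp [ENNReal.div_eq_zero_iff, hε'0]
  have hhalftop : ε' / 2 ≠ ∞ := by
    simp [ENNReal.div_eq_top, hε'top]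
  have hδ0 : δ ≠ 0 := by
    simp [hδ, ENNReal.rpow_eq_zero_iff, hhalf0, hhalftop, hr0, not_lt.2 hr0.le]
  have hδ2pos : 0 < δ / 2 := ENNReal.div_pos hδ0 ENNReal.ofNat_ne_top
  -- tail finset
  obtain ⟨S, hS⟩ : ∃ S : Finset (ℤ × (Fin n → ℤ)),
      (∑' jm : {x : ℤ × (Fin n → ℤ) // x ∉ S}, F jm.1 ^ r) < δ / 2 := by
    have htt := ENNReal.tendsto_tsum_compl_atTop_zero hsum_ne_top
    exact (htt.eventually (gt_mem_nhds hδ2pos)).exists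
  -- finiteness of each local integral
  have hFlt : ∀ jm : ℤ × (Fin n → ℤ), F jm < ∞ := fun jm => by
    have h1 : F jm ^ r ≤ ∑' jm, F jm ^ r := ENNReal.le_tsum jm
    have h2 : F jm ^ r < ∞ := lt_of_le_of_lt h1 hsum_ne_top.lt_top
    exact (ENNReal.rpow_lt_top_iff_of_pos hr0).1 h2
  have hIlt : ∀ jm : ℤ × (Fin n → ℤ),
      (∫⁻ x in dyadicCube n jm.1 jm.2, (‖f x‖₊ : ℝ≥0∞) ^ p) ≠ ∞ := by
    intro jm htop
    have : F jm = ∞ := by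
      rw [hFdef]
      simp only
      rw [htop, ENNReal.top_rpow_of_pos hpinv, ENNReal.mul_top (hC0 jm.1)]
    exact (hFlt jm).ne this
  -- the truncation integrands
  set φ : ℕ → (Fin n → ℝ) → ℝ≥0∞ :=
    fun M x => if ‖f x‖ ≤ (M:ℝ) then 0 else (‖f x‖₊ : ℝ≥0∞) ^ p with hφ
  have hφ_meas : ∀ M : ℕ, AEMeasurable (φ M) volume := by
    intro M
    have hcomp : Measurable (fun c : ℝ => if c ≤ (M:ℝ) then (0:ℝ≥0∞) else ENNReal.ofReal c ^ p) :=
      Measurable.ite measurableSet_Iic measurable_const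
        (ENNReal.measurable_ofReal.pow measurable_const)
    have : φ M = (fun c : ℝ => if c ≤ (M:ℝ) then (0:ℝ≥0∞) else ENNReal.ofReal c ^ p) ∘
        (fun x => ‖f x‖) := by
      funext x
      simp [hφ, Function.comp, ofReal_norm, enorm_eq_nnnorm]
    rw [this]
    exact hcomp.comp_aemeasurable hmeas.norm.aemeasurable
  have hφ_tendsto : ∀ jm : ℤ × (Fin n → ℤ), Tendsto
      (fun M : ℕ => ∫⁻ x in dyadicCube n jm.1 jm.2, φ M x) atTop (𝓝 0) := by
    intro jm
    have h0 : (0:ℝ≥0∞) = ∫⁻ x in dyadicCube n jm.1 jm.2, (0:ℝ≥0∞) := by simp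
    rw [h0]
    refine tendsto_lintegral_of_dominated_convergence'
      (fun x => (‖f x‖₊ : ℝ≥0∞) ^ p) (fun M => (hφ_meas M).restrict) ?_ (hIlt jm) ?_
    · intro M
      refine Filter.Eventually.of_forall fun x => ?_
      by_cases h : ‖f x‖ ≤ (M:ℝ) <;> simp [hφ, h]
    · refine Filter.Eventually.of_forall fun x => ?_
      have hev : ∀ᶠ M : ℕ in atTop, φ M x = 0 := by
        filter_upwards [eventually_ge_atTop ⌈‖f x‖⌉₊] with M hM
        have hle : ‖f x‖ ≤ (M:ℝ) := (Nat.le_ceil _).trans (by exact_mod_cast hM)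
        simp [hφ, hle]
      exact tendsto_const_nhds.congr' (hev.mono fun M h => h.symm)
  set β : ℝ≥0∞ := (δ / 2) / (S.card + 1) with hβ
  have hcard_ne_top : ((S.card : ℝ≥0∞) + 1) ≠ ∞ := by
    simp [ENNReal.add_eq_top]
  have hβ0 : 0 < β := ENNReal.div_pos hδ2pos.ne' hcard_ne_top
  have hterm : ∀ᶠ M : ℕ in atTop, ∀ jm ∈ S,
      (cubeVol n jm.1 ^ θ * (∫⁻ x in dyadicCube n jm.1 jm.2, φ M x) ^ (1/p)) ^ r < β := by
    rw [Filter.eventually_all_finset]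
    intro jm _
    have h1 : Tendsto (fun M : ℕ =>
        (∫⁻ x in dyadicCube n jm.1 jm.2, φ M x) ^ (1/p)) atTop (𝓝 0) := by
      have h := ((ENNReal.continuous_rpow_const (y := 1/p)).tendsto 0).comp (hφ_tendsto jm)
      rwa [ENNReal.zero_rpow_of_pos hpinv] at h
    have h2 : Tendsto (fun M : ℕ => cubeVol n jm.1 ^ θ *
        (∫⁻ x in dyadicCube n jm.1 jm.2, φ M x) ^ (1/p)) atTop (𝓝 0) := by
      have h := ENNReal.Tendsto.const_mul h1 (Or.inr (hCtop jm.1))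
      rwa [mul_zero] at h
    have h3 : Tendsto (fun M : ℕ => (cubeVol n jm.1 ^ θ *
        (∫⁻ x in dyadicCube n jm.1 jm.2, φ M x) ^ (1/p)) ^ r) atTop (𝓝 0) := by
      have h := ((ENNReal.continuous_rpow_const (y := r)).tendsto 0).comp h2
      rwa [ENNReal.zero_rpow_of_pos hr0] at h
    exact h3.eventually (gt_mem_nhds hβ0)
  obtain ⟨M, hM⟩ := hterm.exists
  -- the approximant
  set U : Set (Fin n → ℝ) := ⋃ jm ∈ S, dyadicCube n jm.1 jm.2 with hU
  have hUmeas : MeasurableSet U :=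
    S.measurableSet_biUnion fun jm _ => measurableSet_dyadicCube n jm.1 jm.2
  set g : (Fin n → ℝ) → X := fun x => if x ∈ U ∧ ‖f x‖ ≤ (M:ℝ) then f x else 0 with hg
  have hfg_le : ∀ x, ‖f x - g x‖ ≤ ‖f x‖ := by
    intro x
    by_cases h : x ∈ U ∧ ‖f x‖ ≤ (M:ℝ) <;> simp [hg, h]
  refine ⟨g, ?_, ⟨M, fun x => ?_⟩, ?_, ?_⟩
  · -- a.e. strong measurability
    have hf' : StronglyMeasurable (hmeas.mk f) := hmeas.stronglyMeasurable_mk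
    refine ⟨fun x => if x ∈ U ∧ ‖hmeas.mk f x‖ ≤ (M:ℝ) then hmeas.mk f x else 0, ?_, ?_⟩
    · refine StronglyMeasurable.ite ?_ hf' stronglyMeasurable_const
      exact hUmeas.inter (measurableSet_le hf'.norm.measurable measurable_const)
    · filter_upwards [hmeas.ae_eq_mk] with x hx
      simp only [hg, hx]
  · -- uniform bound
    by_cases h : x ∈ U ∧ ‖f x‖ ≤ (M:ℝ)
    · simpa [hg, h] using h.2
    · simp [hg, h]
  · -- compact support
    have hK : IsCompact (⋃ jm ∈ S, Set.pi Set.univ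
        (fun i => Set.Icc ((2:ℝ)^(-(jm.1:ℝ)) * jm.2 i) ((2:ℝ)^(-(jm.1:ℝ)) * (jm.2 i + 1)))) :=
      S.isCompact_biUnion fun jm _ => isCompact_univ_pi fun i => isCompact_Icc
    refine HasCompactSupport.intro hK ?_
    intro x hx
    by_contra hne
    apply hx
    have hxU : x ∈ U := by
      by_contra hnot
      exact hne (by simp [hg, hnot])
    obtain ⟨jm, hjmS, hjx⟩ := Set.mem_iUnion₂.1 hxU
    exact Set.mem_iUnion₂.2 ⟨jm, hjmS, dyadicCube_subset_Icc n jm.1 jm.2 hjx⟩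
  · -- the norm estimate
    rw [hBM]
    set G : ℤ × (Fin n → ℤ) → ℝ≥0∞ := fun jm => (cubeVol n jm.1 ^ θ *
      (∫⁻ x in dyadicCube n jm.1 jm.2, (‖f x - g x‖₊ : ℝ≥0∞) ^ p) ^ (1/p)) ^ r with hG
    have hGF : ∀ jm : ℤ × (Fin n → ℤ), G jm ≤ F jm ^ r := by
      intro jm
      refine ENNReal.rpow_le_rpow ?_ hr0.le
      refine mul_le_mul_of_nonneg_left ?_ (zero_le)
      refine ENNReal.rpow_le_rpow ?_ hpinv.le
      refine lintegral_mono fun x => ?_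
      refine ENNReal.rpow_le_rpow ?_ hp0.le
      exact_mod_cast ENNReal.coe_le_coe.2 (by
        simpa [← NNReal.coe_le_coe] using hfg_le x)
    have key : (∑' jm : ℤ × (Fin n → ℤ), G jm) ≤ δ := by
      have hsplit : (∑' jm : ℤ × (Fin n → ℤ), G jm) =
          (∑ jm ∈ S, G jm) + ∑' jm : {x : ℤ × (Fin n → ℤ) // x ∉ S}, G jm.1 :=
        ennreal_tsum_split S G
      have h1 : (∑ jm ∈ S, G jm) ≤ δ / 2 := by
        have hGβ : ∀ jm ∈ S, G jm ≤ β := by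
          intro jm hjm
          have hEq : (∫⁻ x in dyadicCube n jm.1 jm.2, (‖f x - g x‖₊ : ℝ≥0∞) ^ p) =
              ∫⁻ x in dyadicCube n jm.1 jm.2, φ M x := by
            refine setLIntegral_congr_fun (measurableSet_dyadicCube n jm.1 jm.2)
              (fun x hx => ?_)
            have hxU : x ∈ U := Set.mem_iUnion₂.2 ⟨jm, hjm, hx⟩
            by_cases hle : ‖f x‖ ≤ (M:ℝ)
            · have : g x = f x := by simp [hg, hxU, hle]
              simp [hφ, hle, this, ENNReal.zero_rpow_of_pos hp0]
            · have : g x = 0 := by simp [hg, hle]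
              simp [hφ, hle, this]
          calc G jm = (cubeVol n jm.1 ^ θ *
              (∫⁻ x in dyadicCube n jm.1 jm.2, φ M x) ^ (1/p)) ^ r := by rw [hG]; simp only [hEq]
            _ ≤ β := (hM jm hjm).le
        calc (∑ jm ∈ S, G jm) ≤ S.card • β := Finset.sum_le_card_nsmul S G β hGβ
          _ = (S.card : ℝ≥0∞) * β := by rw [nsmul_eq_mul]
          _ ≤ ((S.card : ℝ≥0∞) + 1) * β := mul_le_mul_of_nonneg_right le_self_add zero_le
          _ ≤ δ / 2 := by
            rw [hβ]
            exact ENNReal.mul_div_le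
      have h2 : (∑' jm : {x : ℤ × (Fin n → ℤ) // x ∉ S}, G jm.1) ≤ δ / 2 := by
        refine le_trans (ENNReal.tsum_le_tsum (fun jm => hGF jm.1)) ?_
        exact hS.le
      calc (∑' jm : ℤ × (Fin n → ℤ), G jm) ≤ δ / 2 + δ / 2 := by
            rw [hsplit]; exact add_le_add h1 h2
        _ = δ := ENNReal.add_halves δ
    calc (∑' jm : ℤ × (Fin n → ℤ), G jm) ^ (1/r) ≤ δ ^ (1/r) :=
          ENNReal.rpow_le_rpow key hrinv.le
      _ = ε' / 2 := by
          rw [hδ, ← ENNReal.rpow_mul, mul_one_div_cancel hr0.ne', ENNReal.rpow_one]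
      _ < ε' := ENNReal.half_lt_self hε'0 hε'top
      _ ≤ ε := min_le_left ε 1


end
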